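/- Cluster-and-combine satisfies the Axiom of Transformation: if φ : X → Y satisfies α c̄_X(x,x') + (1-α) c̲_X(x,x') ≥ α c̄_Y(φ(x),φ(x')) + (1-α) c̲_Y(φ(x),φ(x')) for all x, x', then u^CL_X(x,x') ≥ u^CL_Y(φ(x),φ(x')) for all x, x'. -/
import Mathlib


/-- The cost of a chain (list of nodes): maximum dissimilarity over consecutive links. -/
def chainCost {X : Type*} (d : X → X → ℝ) : List X → ℝ
  | [] => 0
  | [_] => 0
  | a :: b :: l => max (d a b) (chainCost d (b :: l))

/-- The minimum chain cost between `x` and `x'`: infimum of costs of chains from `x` to `x'`. -/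
noncomputable def minChainCost {X : Type*} (d : X → X → ℝ) (x x' : X) : ℝ :=
  sInf { c | ∃ l : List X, l.head? = some x ∧ l.getLast? = some x' ∧ chainCost d l = c }

/-- Cluster-and-combine ultrametric. -/
noncomputable def uCL {X : Type*} (dlb dub : X → X → ℝ) (α : ℝ) : X → X → ℝ :=
  minChainCost (fun a b => α * minChainCost dub a b + (1 - α) * minChainCost dlb a b)

lemma chainCost_nonneg {X : Type*} (d : X → X → ℝ) (h : ∀ a b, 0 ≤ d a b) :
    ∀ l : List X, 0 ≤ chainCost d l
  | [] => le_refl 0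
  | [_] => le_refl 0
  | a :: b :: _ => le_max_of_le_left (h a b)

lemma chainCost_map_le {X Y : Type*} (dX : X → X → ℝ) (dY : Y → Y → ℝ) (φ : X → Y)
    (h : ∀ a b, dY (φ a) (φ b) ≤ dX a b) :
    ∀ l : List X, chainCost dY (l.map φ) ≤ chainCost dX l
  | [] => le_refl 0
  | [_] => le_refl 0
  | a :: b :: l => by
    simpa [chainCost, List.map] using
      max_le_max (h a b) (chainCost_map_le dX dY φ h (b :: l))

lemma mem_chainSet {X : Type*} (d : X → X → ℝ) (x x' : X) :
    chainCost d [x, x'] ∈ { c | ∃ l : List X, l.head? = some x ∧ l.getLast? = some x' ∧ chainCost d l = c } :=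
  ⟨[x, x'], rfl, rfl, rfl⟩

lemma minChainCost_nonneg {X : Type*} (d : X → X → ℝ) (h : ∀ a b, 0 ≤ d a b) (x x' : X) :
    0 ≤ minChainCost d x x' :=
  le_csInf ⟨_, mem_chainSet d x x'⟩ (by rintro c ⟨l, _, _, rfl⟩; exact chainCost_nonneg d h l)

theorem uCL_axiom_transformation {X Y : Type*} [Fintype X] [Fintype Y]
    (dlbX dubX : X → X → ℝ) (dlbY dubY : Y → Y → ℝ)
    (hslX : ∀ x y, dlbX x y = dlbX y x) (hsuX : ∀ x y, dubX x y = dubX y x)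
    (hbdX : ∀ x y, x ≠ y → 0 < dlbX x y ∧ dlbX x y ≤ dubX x y)
    (hdlX : ∀ x, dlbX x x = 0) (hduX : ∀ x, dubX x x = 0)
    (hslY : ∀ x y, dlbY x y = dlbY y x) (hsuY : ∀ x y, dubY x y = dubY y x)
    (hbdY : ∀ x y, x ≠ y → 0 < dlbY x y ∧ dlbY x y ≤ dubY x y)
    (hdlY : ∀ x, dlbY x x = 0) (hduY : ∀ x, dubY x x = 0)
    (α : ℝ) (hα0 : 0 ≤ α) (hα1 : α ≤ 1)
    (φ : X → Y)
    (hred : ∀ x x',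
      α * minChainCost dubY (φ x) (φ x') + (1 - α) * minChainCost dlbY (φ x) (φ x') ≤
      α * minChainCost dubX x x' + (1 - α) * minChainCost dlbX x x') :
    ∀ x x', uCL dlbY dubY α (φ x) (φ x') ≤ uCL dlbX dubX α x x' := by
  -- nonnegativity of the Y-side combined cost
  have hdlY0 : ∀ a b : Y, 0 ≤ dlbY a b := by
    intro a b
    rcases eq_or_ne a b with h | h
    · simp [h, hdlY]
    · exact (hbdY a b h).1.le
  have hduY0 : ∀ a b : Y, 0 ≤ dubY a b := by
    intro a b
    rcases eq_or_ne a b with h | h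
    · simp [h, hduY]
    · exact le_trans (hbdY a b h).1.le (hbdY a b h).2
  have hcY0 : ∀ a b : Y,
      0 ≤ α * minChainCost dubY a b + (1 - α) * minChainCost dlbY a b := by
    intro a b
    have := minChainCost_nonneg dubY hduY0 a b
    have := minChainCost_nonneg dlbY hdlY0 a b
    have h1α : 0 ≤ 1 - α := by linarith
    positivity
  intro x x'
  unfold uCL minChainCost
  simp only [minChainCost] at hred
  apply le_csInf ⟨_, mem_chainSet _ x x'⟩
  rintro c ⟨l, h1, h2, rfl⟩
  refine le_trans (csInf_le ?_ ?_) (chainCost_map_le _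
      (fun a b => α * minChainCost dubY a b + (1 - α) * minChainCost dlbY a b) φ hred l)
  · exact ⟨0, by rintro c ⟨l', _, _, rfl⟩; exact chainCost_nonneg _ hcY0 l'⟩
  · exact ⟨l.map φ, by simp [List.head?_map, h1], by simp [List.getLast?_map, h2], rfl⟩
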